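/- Let A be a ring such that the canonical map θ_A : (A*)_ab → K₁(A) is an isomorphism (e.g., A semilocal satisfying Vaserstein's condition). Then for every invertible matrix ξ over A, the generalized determinants agree under transposition: det_{A^op}(ξ^T) = det_A(ξ) in (A*)_ab = ((A^op)*)_ab. -/

import Mathlib

set_option maxHeartbeats 1000000

/-- The stable (infinite) general linear group `GL(A) = ⋃ₙ GLₙ(A)`, realized as the group of
`A`-linear automorphisms of the free module `⊕_{i ∈ ℕ} A` that fix all but finitely many of
the standard basis vectors. -/
def stableGL (A : Type*) [Ring A] : Subgroup ((ℕ →₀ A) ≃ₗ[A] (ℕ →₀ A)) where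
  carrier := {φ | ∃ N : ℕ, ∀ i ≥ N, φ (Finsupp.single i 1) = Finsupp.single i 1}
  one_mem' := ⟨0, fun _ _ => rfl⟩
  mul_mem' := by
    rintro a b ⟨N, hN⟩ ⟨M, hM⟩
    exact ⟨max N M, fun i hi => by
      show a (b (Finsupp.single i 1)) = Finsupp.single i 1
      rw [hM i (le_trans (le_max_right N M) hi), hN i (le_trans (le_max_left N M) hi)]⟩
  inv_mem' := by
    rintro a ⟨N, hN⟩
    exact ⟨N, fun i hi => by
      show a.symm (Finsupp.single i 1) = Finsupp.single i 1
      rw [LinearEquiv.symm_apply_eq, hN i hi]⟩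

/-- The classical K₁-group of a ring: `K₁(A) = GL(A)_ab`. -/
abbrev K1 (A : Type*) [Ring A] := Abelianization (stableGL A)

namespace Stmt19

open Finsupp MulOpposite

variable {A : Type*} [Ring A]

lemma stable (φ : stableGL A) :
    ∃ N : ℕ, ∀ i ≥ N, φ.1 (Finsupp.single i 1) = Finsupp.single i 1 := φ.2

lemma apply_coord (f : (ℕ →₀ A) ≃ₗ[A] (ℕ →₀ A)) (c : ℕ →₀ A) (i : ℕ) :
    (f c) i = ∑ j ∈ c.support, c j * (f (Finsupp.single j 1)) i := by
  have hdecomp : c = ∑ j ∈ c.support, Finsupp.single j (c j) := by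
    have h := (Finsupp.sum_single c).symm
    rwa [Finsupp.sum] at h
  conv_lhs => rw [hdecomp]
  rw [map_sum, Finsupp.finset_sum_apply]
  refine Finset.sum_congr rfl fun j _ => ?_
  have h1 : Finsupp.single j (c j) = c j • Finsupp.single j (1 : A) := by
    rw [Finsupp.smul_single', mul_one]
  rw [h1, map_smul, Finsupp.smul_apply, smul_eq_mul]

lemma exists_bound (φ : stableGL A) : ∃ B : ℕ, ∀ i ≥ B, ∀ j : ℕ,
    (φ.1 (Finsupp.single j 1)) i = (Finsupp.single i (1 : A)) j := by
  obtain ⟨N, hN⟩ := stable φ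
  set S := (Finset.range N).sup (fun j => ((φ.1 (Finsupp.single j 1)).support.sup id) + 1)
    with hS
  refine ⟨max N S, fun i hi j => ?_⟩
  have hiN : N ≤ i := le_trans (le_max_left _ _) hi
  have hiS : S ≤ i := le_trans (le_max_right _ _) hi
  by_cases hj : N ≤ j
  · rw [hN j hj]
    simp [Finsupp.single_apply, eq_comm]
  · push_neg at hj
    have h0 : (φ.1 (Finsupp.single j 1)) i = 0 := by
      by_contra h
      have hmem : i ∈ (φ.1 (Finsupp.single j 1)).support := Finsupp.mem_support_iff.mpr h
      have h1 : i ≤ (φ.1 (Finsupp.single j 1)).support.sup id := Finset.le_sup (f := id) hmem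
      have h2 : ((φ.1 (Finsupp.single j 1)).support.sup id) + 1 ≤ S :=
        hS ▸ Finset.le_sup (f := fun j => ((φ.1 (Finsupp.single j 1)).support.sup id) + 1)
          (Finset.mem_range.mpr hj)
      omega
    rw [h0]
    have hij : i ≠ j := by omega
    rw [Finsupp.single_apply, if_neg hij]

noncomputable def Trow (φ : stableGL A) (i : ℕ) : ℕ →₀ Aᵐᵒᵖ :=
  Finsupp.onFinset (Finset.range (max (stable φ).choose (i + 1)))
    (fun j => op ((φ.1 (Finsupp.single j 1)) i))
    (by
      intro j hj
      rw [Finset.mem_range]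
      by_contra hj'
      push_neg at hj'
      have hj2 : op ((φ.1 (Finsupp.single j 1)) i) ≠ 0 := hj
      have hN : φ.1 (Finsupp.single j 1) = Finsupp.single j 1 :=
        (stable φ).choose_spec j (le_trans (le_max_left _ _) hj')
      have hji : j ≠ i := by omega
      rw [hN, Finsupp.single_apply, if_neg hji, op_zero] at hj2
      exact hj2 rfl)

lemma Trow_apply (φ : stableGL A) (i j : ℕ) :
    Trow φ i j = op ((φ.1 (Finsupp.single j 1)) i) := rfl

noncomputable def Tlin (φ : stableGL A) : (ℕ →₀ Aᵐᵒᵖ) →ₗ[Aᵐᵒᵖ] (ℕ →₀ Aᵐᵒᵖ) :=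
  Finsupp.linearCombination Aᵐᵒᵖ (Trow φ)

lemma Tlin_single (φ : stableGL A) (i : ℕ) :
    Tlin φ (Finsupp.single i 1) = Trow φ i := by
  rw [Tlin, Finsupp.linearCombination_single, one_smul]

lemma Tlin_coord (φ : stableGL A) (y : ℕ →₀ Aᵐᵒᵖ) (k : ℕ) :
    (Tlin φ y) k = ∑ j ∈ y.support, y j * Trow φ j k := by
  rw [Tlin, Finsupp.linearCombination_apply, Finsupp.sum, Finsupp.finset_sum_apply]
  exact Finset.sum_congr rfl fun j _ => by rw [Finsupp.smul_apply, smul_eq_mul]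

lemma Trow_mul (φ ψ : stableGL A) (i : ℕ) :
    Tlin φ (Trow ψ i) = Trow (ψ * φ) i := by
  ext k
  set c := φ.1 (Finsupp.single k 1) with hc
  have hL : (Tlin φ (Trow ψ i)) k
      = ∑ j ∈ (Trow ψ i).support, op (c j * (ψ.1 (Finsupp.single j 1)) i) := by
    rw [Tlin_coord]
    refine Finset.sum_congr rfl fun j _ => ?_
    rw [Trow_apply, Trow_apply, ← MulOpposite.op_mul]
  have hR : Trow (ψ * φ) i k = ∑ j ∈ c.support, op (c j * (ψ.1 (Finsupp.single j 1)) i) := by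
    rw [Trow_apply]
    have h1 : ((ψ * φ).1 (Finsupp.single k 1)) = ψ.1 c := rfl
    rw [h1, apply_coord]
    exact map_sum (MulOpposite.opAddEquiv (α := A)) _ _
  have e1 : ∑ j ∈ (Trow ψ i).support, op (c j * (ψ.1 (Finsupp.single j 1)) i)
      = ∑ j ∈ (Trow ψ i).support ∪ c.support, op (c j * (ψ.1 (Finsupp.single j 1)) i) :=
    Finset.sum_subset Finset.subset_union_left (fun j _ hj => by
        have h0 : (ψ.1 (Finsupp.single j 1)) i = 0 := by
          have h := Finsupp.notMem_support_iff.mp hj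
          rw [Trow_apply] at h
          exact (MulOpposite.op_eq_zero_iff _).mp h
        rw [h0, mul_zero, op_zero])
  have e2 : ∑ j ∈ c.support, op (c j * (ψ.1 (Finsupp.single j 1)) i)
      = ∑ j ∈ (Trow ψ i).support ∪ c.support, op (c j * (ψ.1 (Finsupp.single j 1)) i) :=
    Finset.sum_subset Finset.subset_union_right (fun j _ hj => by
        have h0 : c j = 0 := Finsupp.notMem_support_iff.mp hj
        rw [h0, zero_mul, op_zero])
  rw [hL, hR, e1, e2]

lemma Tlin_mul (φ ψ : stableGL A) : (Tlin φ).comp (Tlin ψ) = Tlin (ψ * φ) := by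
  apply Finsupp.lhom_ext
  intro i b
  have hb : (Finsupp.single i b : ℕ →₀ Aᵐᵒᵖ) = b • Finsupp.single i 1 := by
    rw [Finsupp.smul_single', mul_one]
  rw [hb, map_smul, map_smul]
  congr 1
  show Tlin φ (Tlin ψ (Finsupp.single i 1)) = Tlin (ψ * φ) (Finsupp.single i 1)
  rw [Tlin_single, Tlin_single, Trow_mul]

lemma Tlin_one : Tlin (1 : stableGL A) = LinearMap.id := by
  apply Finsupp.lhom_ext
  intro i b
  have hb : (Finsupp.single i b : ℕ →₀ Aᵐᵒᵖ) = b • Finsupp.single i 1 := by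
    rw [Finsupp.smul_single', mul_one]
  rw [hb, map_smul, map_smul, Tlin_single]
  congr 1
  ext k
  rw [Trow_apply]
  show op ((Finsupp.single k (1 : A)) i) = (Finsupp.single i (1 : Aᵐᵒᵖ)) k
  simp [Finsupp.single_apply, apply_ite MulOpposite.op, eq_comm]

noncomputable def Tfun (φ : stableGL A) : stableGL Aᵐᵒᵖ :=
  ⟨LinearEquiv.ofLinear (Tlin φ) (Tlin φ⁻¹)
      (by rw [Tlin_mul, inv_mul_cancel, Tlin_one])
      (by rw [Tlin_mul, mul_inv_cancel, Tlin_one]),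
   by
    obtain ⟨B, hB⟩ := exists_bound φ
    refine ⟨B, fun i hi => ?_⟩
    show Tlin φ (Finsupp.single i 1) = Finsupp.single i 1
    rw [Tlin_single]
    ext k
    rw [Trow_apply, hB i hi k]
    simp [Finsupp.single_apply, apply_ite MulOpposite.op]⟩

lemma Tfun_mul (φ ψ : stableGL A) : Tfun (ψ * φ) = Tfun φ * Tfun ψ := by
  apply Subtype.ext
  apply LinearEquiv.toLinearMap_injective
  apply LinearMap.ext
  intro x
  show Tlin (ψ * φ) x = Tlin φ (Tlin ψ x)
  rw [← Tlin_mul]; rfl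

lemma Tfun_one : Tfun (1 : stableGL A) = 1 := by
  apply Subtype.ext
  apply LinearEquiv.toLinearMap_injective
  apply LinearMap.ext
  intro x
  show Tlin 1 x = x
  rw [Tlin_one]; rfl

noncomputable def Tab : K1 A →* K1 Aᵐᵒᵖ :=
  Abelianization.lift
  { toFun := fun φ => Abelianization.of (Tfun φ)
    map_one' := by
      show Abelianization.of (Tfun (1 : stableGL A)) = 1
      rw [Tfun_one]; simp
    map_mul' := fun φ ψ => by
      show Abelianization.of (Tfun (φ * ψ)) = Abelianization.of (Tfun φ) * Abelianization.of (Tfun ψ)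
      rw [Tfun_mul ψ φ, map_mul]
      exact mul_comm _ _ }

lemma Tab_of (φ : stableGL A) : Tab (Abelianization.of φ) = Abelianization.of (Tfun φ) :=
  Abelianization.lift_apply_of _ _

noncomputable def Dlin (a : A) : (ℕ →₀ A) →ₗ[A] (ℕ →₀ A) :=
  Finsupp.linearCombination A (fun i => Finsupp.single i (if i = 0 then a else 1))

lemma Dlin_single (a : A) (i : ℕ) (b : A) :
    Dlin a (Finsupp.single i b) = Finsupp.single i (b * (if i = 0 then a else 1)) := by
  rw [Dlin, Finsupp.linearCombination_single, Finsupp.smul_single']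

noncomputable def Diag (u : Aˣ) : stableGL A :=
  ⟨LinearEquiv.ofLinear (Dlin (u : A)) (Dlin ((u⁻¹ : Aˣ) : A))
    (by
      apply Finsupp.lhom_ext
      intro i b
      rw [LinearMap.comp_apply, Dlin_single, Dlin_single, LinearMap.id_apply]
      by_cases h : i = 0 <;> simp [h, mul_assoc])
    (by
      apply Finsupp.lhom_ext
      intro i b
      rw [LinearMap.comp_apply, Dlin_single, Dlin_single, LinearMap.id_apply]
      by_cases h : i = 0 <;> simp [h, mul_assoc]),
   ⟨1, fun i hi => by
      show Dlin (u : A) (Finsupp.single i 1) = Finsupp.single i 1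
      rw [Dlin_single, if_neg (by omega), mul_one]⟩⟩

lemma Diag_zero (u : Aˣ) :
    (Diag u).1 (Finsupp.single 0 1) = Finsupp.single 0 (u : A) := by
  show Dlin (u : A) (Finsupp.single 0 1) = _
  rw [Dlin_single, if_pos rfl, one_mul]

lemma Diag_ne (u : Aˣ) (i : ℕ) (hi : i ≠ 0) :
    (Diag u).1 (Finsupp.single i 1) = Finsupp.single i 1 := by
  show Dlin (u : A) (Finsupp.single i 1) = _
  rw [Dlin_single, if_neg hi, mul_one]

lemma Tfun_diag_zero (u : Aˣ) :
    (Tfun (Diag u)).1 (Finsupp.single 0 1) = Finsupp.single 0 (op (u : A)) := by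
  show Tlin (Diag u) (Finsupp.single 0 1) = _
  rw [Tlin_single]
  ext k
  rw [Trow_apply]
  show op ((Dlin (u : A) (Finsupp.single k 1)) 0) = _
  rw [Dlin_single, one_mul]
  by_cases h : k = 0
  · subst h; simp
  · simp [Finsupp.single_apply, h, Ne.symm h]

lemma Tfun_diag_ne (u : Aˣ) (i : ℕ) (hi : i ≠ 0) :
    (Tfun (Diag u)).1 (Finsupp.single i 1) = Finsupp.single i 1 := by
  show Tlin (Diag u) (Finsupp.single i 1) = _
  rw [Tlin_single]
  ext k
  rw [Trow_apply]
  show op ((Dlin (u : A) (Finsupp.single k 1)) i) = _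
  rw [Dlin_single]
  by_cases h : k = i
  · subst h
    rw [if_neg hi, mul_one]
    simp
  · rw [Finsupp.single_apply, if_neg h, op_zero, Finsupp.single_apply, if_neg (Ne.symm h)]

noncomputable def E : (Aᵐᵒᵖ)ˣ →* Abelianization Aˣ where
  toFun w := Abelianization.of (MulOpposite.unop (Units.opEquiv w))
  map_one' := by simp
  map_mul' w₁ w₂ := by
    show Abelianization.of (MulOpposite.unop (Units.opEquiv (w₁ * w₂))) = _
    rw [map_mul, MulOpposite.unop_mul, map_mul]
    exact mul_comm _ _

end Stmt19

/-- Let `A` be a ring for which the canonical maps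
`θ_A : (A*)_ab → K₁(A)` and `θ_{A^op} : ((A^op)*)_ab → K₁(A^op)` (induced by the inclusions
`GL₁ ↪ GL`, i.e. sending the class of a unit `u` to the class of the stable matrix
`diag(u, 1, 1, ...)`) are isomorphisms, so that the generalized determinants
`det_A = θ_A⁻¹` and `det_{A^op} = θ_{A^op}⁻¹` exist. Then for every stable invertible matrix
`ξ` over `A` with transpose `ξᵀ` (a stable invertible matrix over `A^op`), one has
`det_{A^op}(ξᵀ) = det_A(ξ)` in `(A*)_ab = ((A^op)*)_ab`: if `u` and `v` are units with
`θ_A[u] = [ξ]` and `θ_{A^op}[v] = [ξᵀ]`, then `[u] = [v]` under the identification of the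
units of `A^op` with those of `A`. -/
theorem stmt_19 (A : Type*) [Ring A]
    (θA : Abelianization Aˣ →* K1 A)
    (θAop : Abelianization (Aᵐᵒᵖ)ˣ →* K1 Aᵐᵒᵖ)
    (hθA : ∀ (u : Aˣ) (φ : stableGL A),
      (φ.1 (Finsupp.single 0 1) = Finsupp.single 0 (u : A) ∧
        ∀ i : ℕ, i ≠ 0 → φ.1 (Finsupp.single i 1) = Finsupp.single i 1) →
      θA (Abelianization.of u) = Abelianization.of φ)
    (hθAop : ∀ (u : (Aᵐᵒᵖ)ˣ) (φ : stableGL Aᵐᵒᵖ),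
      (φ.1 (Finsupp.single 0 1) = Finsupp.single 0 (u : Aᵐᵒᵖ) ∧
        ∀ i : ℕ, i ≠ 0 → φ.1 (Finsupp.single i 1) = Finsupp.single i 1) →
      θAop (Abelianization.of u) = Abelianization.of φ)
    (hbijA : Function.Bijective θA) (hbijAop : Function.Bijective θAop)
    (ξ : stableGL A) (ξT : stableGL Aᵐᵒᵖ)
    (hT : ∀ i j : ℕ, (ξ.1 (Finsupp.single j 1)) i
        = MulOpposite.unop ((ξT.1 (Finsupp.single i 1)) j))
    (u : Aˣ) (v : (Aᵐᵒᵖ)ˣ)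
    (hu : θA (Abelianization.of u) = Abelianization.of ξ)
    (hv : θAop (Abelianization.of v) = Abelianization.of ξT) :
    Abelianization.of u = Abelianization.of (MulOpposite.unop (Units.opEquiv v)) := by
  open Stmt19 MulOpposite in
  classical
  -- θA sends [u] to the diagonal matrix class
  have hDiag : θA (Abelianization.of u) = Abelianization.of (Diag u) :=
    hθA u (Diag u) ⟨Diag_zero u, Diag_ne u⟩
  set u' : (Aᵐᵒᵖ)ˣ := Units.opEquiv.symm (MulOpposite.op u) with hu'
  have hu'c : (u' : Aᵐᵒᵖ) = MulOpposite.op (u : A) := Units.coe_opEquiv_symm _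
  have hop : θAop (Abelianization.of u') = Abelianization.of (Tfun (Diag u)) :=
    hθAop u' (Tfun (Diag u))
      ⟨by rw [hu'c]; exact Tfun_diag_zero u, Tfun_diag_ne u⟩
  -- the transpose of ξ is ξT
  have hTξ : Tfun ξ = ξT := by
    apply Subtype.ext
    apply LinearEquiv.toLinearMap_injective
    apply Finsupp.lhom_ext
    intro i b
    have hb : (Finsupp.single i b : ℕ →₀ Aᵐᵒᵖ) = b • Finsupp.single i 1 := by
      rw [Finsupp.smul_single', mul_one]
    rw [hb, map_smul, map_smul]
    congr 1
    show Tlin ξ (Finsupp.single i 1) = ξT.1 (Finsupp.single i 1)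
    rw [Tlin_single]
    ext k
    rw [Trow_apply, hT i k, MulOpposite.op_unop]
  have key : θAop (Abelianization.of u') = θAop (Abelianization.of v) := by
    rw [hop, hv, ← hTξ, ← Tab_of, ← Tab_of, ← hDiag, ← hu]
  have huv : Abelianization.of u' = Abelianization.of v := hbijAop.injective key
  have hfinal := congrArg (Abelianization.lift (E (A := A))) huv
  rw [Abelianization.lift_apply_of, Abelianization.lift_apply_of] at hfinal
  have hEu' : (E (A := A)) u' = Abelianization.of u := by
    show Abelianization.of (MulOpposite.unop (Units.opEquiv u')) = _
    rw [hu', MulEquiv.apply_symm_apply, MulOpposite.unop_op]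
  rw [hEu'] at hfinal
  exact hfinal
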